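/- Let M be a lattice and let A and B be sublattices of M with A ∪ B = M such that A is downward closed in M, B is upward closed in M, the intersection A ∩ B contains at least two elements, and for all x ∈ A \ B and y ∈ B \ A with x ≤ y there exists m ∈ A ∩ B with x ≤ m ≤ y. If A and B (with the induced lattice structures) are simple lattices, then M is a simple lattice. -/
import Mathlib


/-- A congruence of a lattice: an equivalence relation compatible with `⊔` and `⊓`. -/
structure LatCon (L : Type*) [Lattice L] where
  rel : L → L → Prop
  refl : ∀ x, rel x x
  symm : ∀ {x y}, rel x y → rel y x
  trans : ∀ {x y z}, rel x y → rel y z → rel x z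
  sup : ∀ {x₁ y₁ x₂ y₂}, rel x₁ y₁ → rel x₂ y₂ → rel (x₁ ⊔ x₂) (y₁ ⊔ y₂)
  inf : ∀ {x₁ y₁ x₂ y₂}, rel x₁ y₁ → rel x₂ y₂ → rel (x₁ ⊓ x₂) (y₁ ⊓ y₂)

/-- A lattice is simple if it has at least two elements and its only congruences
are the equality congruence `Δ` and the full congruence `∇`. -/
def IsSimpleLat (L : Type*) [Lattice L] : Prop :=
  Nontrivial L ∧ ∀ θ : LatCon L, (∀ x y, θ.rel x y ↔ x = y) ∨ (∀ x y, θ.rel x y)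

/-- Restriction of a congruence to a sublattice. -/
def LatCon.restrict {M : Type*} [Lattice M] (θ : LatCon M) (S : Sublattice M) :
    LatCon ↥S where
  rel a b := θ.rel a b
  refl a := θ.refl a
  symm h := θ.symm h
  trans h₁ h₂ := θ.trans h₁ h₂
  sup h₁ h₂ := θ.sup h₁ h₂
  inf h₁ h₂ := θ.inf h₁ h₂

/-- **Lemma (Hall–Dilworth gluing).** Let `M` be a lattice and `A`, `B` sublattices
with `A ∪ B = M`, `A` downward closed, `B` upward closed, `A ∩ B` containing at least
two elements, and such that for all `x ∈ A \ B` and `y ∈ B \ A` with `x ≤ y` there is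
`m ∈ A ∩ B` with `x ≤ m ≤ y`.  If `A` and `B` are simple lattices, then so is `M`. -/
theorem simple_of_gluing {M : Type*} [Lattice M] (A B : Sublattice M)
    (hUnion : ∀ x : M, x ∈ A ∨ x ∈ B)
    (hA : IsLowerSet (A : Set M)) (hB : IsUpperSet (B : Set M))
    (hInter : ∃ x y : M, x ∈ A ∧ x ∈ B ∧ y ∈ A ∧ y ∈ B ∧ x ≠ y)
    (hMid : ∀ x ∈ (A : Set M) \ B, ∀ y ∈ (B : Set M) \ A, x ≤ y →
      ∃ m : M, m ∈ A ∧ m ∈ B ∧ x ≤ m ∧ m ≤ y)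
    (hAs : IsSimpleLat ↥A) (hBs : IsSimpleLat ↥B) :
    IsSimpleLat M := by
  obtain ⟨p, q, hpA, hpB, hqA, hqB, hpq⟩ := hInter
  refine ⟨⟨p, q, hpq⟩, fun θ => ?_⟩
  rcases hAs.2 (θ.restrict A) with hA' | hA' <;> rcases hBs.2 (θ.restrict B) with hB' | hB'
  · -- both Δ
    left
    -- key: for u ≤ v, θ.rel u v → u = v
    have key : ∀ u v : M, u ≤ v → θ.rel u v → u = v := by
      intro u v huv h
      by_cases hvA : v ∈ A
      · have huA : u ∈ A := hA huv hvA
        have := (hA' ⟨u, huA⟩ ⟨v, hvA⟩).mp h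
        exact congrArg Subtype.val this
      · have hvB : v ∈ B := (hUnion v).resolve_left hvA
        by_cases huB : u ∈ B
        · have := (hB' ⟨u, huB⟩ ⟨v, hvB⟩).mp h
          exact congrArg Subtype.val this
        · have huA : u ∈ A := (hUnion u).resolve_right huB
          obtain ⟨m, hmA, hmB, hum, hmv⟩ := hMid u ⟨huA, huB⟩ v ⟨hvB, hvA⟩ huv
          have h1 : θ.rel (u ⊓ m) (v ⊓ m) := θ.inf h (θ.refl m)
          rw [inf_eq_left.mpr hum, inf_eq_right.mpr hmv] at h1
          have h2 : θ.rel (u ⊔ m) (v ⊔ m) := θ.sup h (θ.refl m)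
          rw [sup_eq_right.mpr hum, sup_eq_left.mpr hmv] at h2
          have e1 : u = m := congrArg Subtype.val ((hA' ⟨u, huA⟩ ⟨m, hmA⟩).mp h1)
          have e2 : m = v := congrArg Subtype.val ((hB' ⟨m, hmB⟩ ⟨v, hvB⟩).mp h2)
          exact e1.trans e2
    intro x y
    constructor
    · intro h
      have h1 : θ.rel (x ⊓ y) (y ⊓ y) := θ.inf h (θ.refl y)
      rw [inf_idem] at h1
      have h2 : θ.rel (x ⊓ x) (y ⊓ x) := θ.inf h (θ.refl x)
      rw [inf_idem] at h2
      have e1 : x ⊓ y = y := key _ _ inf_le_right h1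
      have e2 : y ⊓ x = x := key _ _ inf_le_right (θ.symm h2)
      refine le_antisymm ?_ ?_
      · rw [← e2]; exact inf_le_left
      · rw [← e1]; exact inf_le_left
    · rintro rfl; exact θ.refl x
  · -- A Δ, B ∇ : contradiction via p ≠ q
    exact absurd (congrArg Subtype.val ((hA' ⟨p, hpA⟩ ⟨q, hqA⟩).mp
      (hB' ⟨p, hpB⟩ ⟨q, hqB⟩))) hpq
  · -- A ∇, B Δ : contradiction
    exact absurd (congrArg Subtype.val ((hB' ⟨p, hpB⟩ ⟨q, hqB⟩).mp
      (hA' ⟨p, hpA⟩ ⟨q, hqA⟩))) hpq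
  · -- both ∇
    right
    have key : ∀ u v : M, u ≤ v → θ.rel u v := by
      intro u v huv
      by_cases hvA : v ∈ A
      · exact hA' ⟨u, hA huv hvA⟩ ⟨v, hvA⟩
      · have hvB : v ∈ B := (hUnion v).resolve_left hvA
        by_cases huB : u ∈ B
        · exact hB' ⟨u, huB⟩ ⟨v, hvB⟩
        · have huA : u ∈ A := (hUnion u).resolve_right huB
          obtain ⟨m, hmA, hmB, hum, hmv⟩ := hMid u ⟨huA, huB⟩ v ⟨hvB, hvA⟩ huv
          exact θ.trans (hA' ⟨u, huA⟩ ⟨m, hmA⟩) (hB' ⟨m, hmB⟩ ⟨v, hvB⟩)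
    intro x y
    exact θ.trans (key x (x ⊔ y) le_sup_left) (θ.symm (key y (x ⊔ y) le_sup_right))
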